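/- For real q < 1 define F(q) = Γ(1 − q) Γ(3 − 2q) / Γ(3 − q) · ∏_{m=1}^∞ m^{2q} · Γ(1 − q + m)³ Γ(2 − q + m) / [ Γ(1 + m)³ Γ(2 − 2q + m) ]. Then the infinite product converges and for every positive integer l, F(−l) = ∏_{k=0}^{l−1} (3 + l + k)! / [ ((k+1)!)² · k! ]. -/

import Mathlib

open Real Filter Finset Topology Nat

set_option maxHeartbeats 1000000
section Stmt17Aux



noncomputable def Rr (a : ℝ) (m : ℕ) : ℝ :=
  Real.Gamma ((m:ℝ) + 1 + a) / (Real.Gamma ((m:ℝ) + 1) * ((m:ℝ) + 1) ^ a)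

lemma Rr_pos {a : ℝ} (ha : 0 < a) (m : ℕ) : 0 < Rr a m := by
  have h1 : (0:ℝ) < (m:ℝ) + 1 := by positivity
  exact div_pos (Real.Gamma_pos_of_pos (by linarith)) (by positivity)

lemma Gamma_prod (a : ℝ) (ha : 0 < a) (m : ℕ) :
    Real.Gamma ((m:ℝ) + 1 + a) = Real.Gamma a * ∏ j ∈ range (m+1), (a + j) := by
  induction m with
  | zero =>
      simp only [Nat.cast_zero, zero_add, prod_range_one, Nat.cast_zero, add_zero]
      rw [add_comm, Real.Gamma_add_one ha.ne', mul_comm]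
  | succ n ih =>
      have h : ((n:ℝ)+1) + 1 + a = ((n:ℝ) + 1 + a) + 1 := by ring
      rw [prod_range_succ, ← mul_assoc, ← ih, Nat.cast_succ, h,
        Real.Gamma_add_one (by positivity), mul_comm]
      ring_nf

lemma Rr_tendsto_one {a : ℝ} (ha : 0 < a) : Tendsto (Rr a) atTop (𝓝 1) := by
  have hga : 0 < Real.Gamma a := Real.Gamma_pos_of_pos ha
  have hq : ∀ m : ℕ, 1 ≤ m → Rr a m = Real.Gamma a * ((m:ℝ)/((m:ℝ)+1)) ^ a / Real.GammaSeq a m := by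
    intro m hm
    have hm0 : (0:ℝ) < m := by exact_mod_cast hm
    have hprodpos : 0 < ∏ j ∈ range (m+1), (a + (j:ℝ)) := by
      apply prod_pos; intro j _; positivity
    rw [Rr, Real.GammaSeq, Gamma_prod a ha m, Real.Gamma_nat_eq_factorial m]
    rw [Real.div_rpow hm0.le (by positivity)]
    field_simp
  have h1 : Tendsto (fun m : ℕ => ((m:ℝ)/((m:ℝ)+1))) atTop (𝓝 1) := by
    have := tendsto_natCast_div_add_atTop (1:ℝ)
    simpa using this
  have h2 : Tendsto (fun m : ℕ => ((m:ℝ)/((m:ℝ)+1)) ^ a) atTop (𝓝 1) := by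
    have hc : ContinuousAt (fun x : ℝ => x ^ a) 1 :=
      Real.continuousAt_rpow_const 1 a (Or.inl one_ne_zero)
    have := hc.tendsto.comp h1
    simpa [Function.comp_def] using this
  have h3 : Tendsto (fun m : ℕ => Real.Gamma a * ((m:ℝ)/((m:ℝ)+1)) ^ a / Real.GammaSeq a m)
      atTop (𝓝 1) := by
    have h4 := ((tendsto_const_nhds (x := Real.Gamma a)).mul h2).div
      (Real.GammaSeq_tendsto_Gamma a) hga.ne'
    rw [mul_one, div_self hga.ne'] at h4; exact h4
  exact h3.congr' (by filter_upwards [eventually_ge_atTop 1] with m hm; exact (hq m hm).symm)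



noncomputable def ss (a : ℝ) (j : ℕ) : ℝ :=
  a * Real.log (1 + 1/((j:ℝ)+1)) - Real.log (1 + a/((j:ℝ)+1))

lemma log_Rr_sub {a : ℝ} (ha : 0 < a) (j : ℕ) :
    Real.log (Rr a j) - Real.log (Rr a (j+1)) = ss a j := by
  have hj1 : (0:ℝ) < (j:ℝ) + 1 := by positivity
  have hj2 : (0:ℝ) < (j:ℝ) + 2 := by positivity
  have hg1 : 0 < Real.Gamma ((j:ℝ)+1) := Real.Gamma_pos_of_pos hj1
  have hg1a : 0 < Real.Gamma ((j:ℝ)+1+a) := Real.Gamma_pos_of_pos (by linarith)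
  have e1 : ((j+1:ℕ):ℝ) + 1 + a = ((j:ℝ)+1+a) + 1 := by push_cast; ring
  have e2 : ((j+1:ℕ):ℝ) + 1 = ((j:ℝ)+1) + 1 := by push_cast; ring
  have key : Rr a (j+1) = Rr a j * (((j:ℝ)+1+a)/((j:ℝ)+1)) / ((((j:ℝ)+2)/((j:ℝ)+1)) ^ a) := by
    rw [Rr, Rr, e1, e2, Real.Gamma_add_one (by positivity), Real.Gamma_add_one hj1.ne']
    rw [Real.div_rpow hj2.le hj1.le]
    have h2 : ((j:ℝ)+1) + 1 = (j:ℝ) + 2 := by ring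
    rw [h2]
    field_simp
  have hrp : 0 < Rr a j :=
    div_pos (Real.Gamma_pos_of_pos (by linarith)) (by positivity)
  rw [key, Real.log_div (by positivity) (by positivity), Real.log_mul hrp.ne' (by positivity),
    Real.log_rpow (by positivity), Real.log_div (by positivity) hj1.ne',
    Real.log_div (by positivity) hj1.ne', ss]
  have h3 : 1 + 1/((j:ℝ)+1) = ((j:ℝ)+2)/((j:ℝ)+1) := by field_simp; ring
  have h4 : 1 + a/((j:ℝ)+1) = ((j:ℝ)+1+a)/((j:ℝ)+1) := by field_simp
  rw [h3, h4, Real.log_div hj2.ne' hj1.ne', Real.log_div (by positivity) hj1.ne']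
  ring

lemma cubic_bound {v : ℝ} (hv : |v| ≤ 1/2) :
    |Real.log (1+v) - (v - v^2/2)| ≤ 2 * |v|^3 := by
  have h1 : |(-v)| < 1 := by rw [abs_neg]; linarith [abs_nonneg v]
  have := Real.abs_log_sub_add_sum_range_le h1 2
  have hsum : ∑ i ∈ range 2, (-v)^(i+1)/((i:ℝ)+1) = -v + v^2/2 := by
    simp [Finset.sum_range_succ]; ring
  rw [hsum] at this
  have h2 : (1 : ℝ) - (-v) = 1 + v := by ring
  rw [h2, abs_neg] at this
  have h3 : |v|^(2+1)/(1-|v|) ≤ 2*|v|^3 := by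
    rw [div_le_iff₀ (by linarith)]
    have h4 : (1:ℝ) ≤ 2*(1-|v|) := by linarith
    have h5 : (0:ℝ) ≤ |v|^3 := pow_nonneg (abs_nonneg v) 3
    calc |v|^(2+1) = |v|^3 * 1 := by ring
      _ ≤ |v|^3 * (2*(1-|v|)) := by nlinarith
      _ = 2*|v|^3*(1-|v|) := by ring
  calc |Real.log (1+v) - (v - v^2/2)| = |(-v + v^2/2) + Real.log (1+v)| := by
        congr 1; ring
    _ ≤ |v|^(2+1)/(1-|v|) := this
    _ ≤ 2*|v|^3 := h3



lemma ss_bound (a : ℝ) (j : ℕ) (hj : 2*(|a|+1) ≤ (j:ℝ)+1) :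
    |ss a j - (a^2-a)/(2*((j:ℝ)+1)^2)| ≤ (2*|a| + 2*|a|^3) / ((j:ℝ)+1)^3 := by
  set x : ℝ := (j:ℝ)+1 with hx
  have hx2 : (2:ℝ) ≤ x := by have := abs_nonneg a; linarith
  have hx0 : (0:ℝ) < x := by linarith
  set u : ℝ := 1/x with hu
  have hu0 : 0 < u := by positivity
  have hu2 : u ≤ 1/2 := by rw [hu]; rw [div_le_div_iff₀ hx0 (by norm_num)]; linarith
  have hau : |a * u| ≤ 1/2 := by
    rw [abs_mul, abs_of_pos hu0]
    have h1 : |a| * u ≤ |a| * (1/(2*(|a|+1))) := by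
      apply mul_le_mul_of_nonneg_left _ (abs_nonneg a)
      rw [hu, div_le_div_iff₀ hx0 (by positivity)]; linarith
    have h2 : |a| * (1/(2*(|a|+1))) ≤ 1/2 := by
      rw [mul_one_div, div_le_div_iff₀ (by positivity) (by norm_num)]
      nlinarith [abs_nonneg a]
    linarith [h1.trans h2]
  have e1 := cubic_bound (v := u) (by rw [abs_of_pos hu0]; exact hu2)
  have e2 := cubic_bound (v := a*u) hau
  have key : ss a j - (a^2-a)/(2*x^2) =
      a * (Real.log (1+u) - (u - u^2/2)) - (Real.log (1+a*u) - (a*u - (a*u)^2/2)) := by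
    rw [ss]
    have : a/x = a*u := by rw [hu]; ring
    rw [this, hu]
    field_simp
    ring
  rw [key]
  have hb : |a * (Real.log (1+u) - (u - u^2/2)) - (Real.log (1+a*u) - (a*u - (a*u)^2/2))|
      ≤ |a| * (2*|u|^3) + 2*|a*u|^3 := by
    calc _ ≤ |a * (Real.log (1+u) - (u - u^2/2))| + |Real.log (1+a*u) - (a*u - (a*u)^2/2)| :=
          abs_sub _ _
      _ ≤ |a| * (2*|u|^3) + 2*|a*u|^3 := by
          rw [abs_mul]
          exact add_le_add (mul_le_mul_of_nonneg_left e1 (abs_nonneg a)) e2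
  have hq : |a| * (2*|u|^3) + 2*|a*u|^3 = (2*|a| + 2*|a|^3) * u^3 := by
    rw [abs_mul, abs_of_pos hu0, mul_pow]
    ring
  have hu3 : u^3 = 1/x^3 := by rw [hu, div_pow, one_pow]
  rw [hq, hu3] at hb
  calc _ ≤ (2*|a| + 2*|a|^3) * (1/x^3) := hb
    _ = (2*|a| + 2*|a|^3) / x^3 := by ring



lemma summable_inv_sq : Summable (fun j : ℕ => 1/((j:ℝ)+1)^2) := by
  have h := Real.summable_one_div_nat_pow.mpr (show 1 < 2 by norm_num)
  have h2 := (summable_nat_add_iff 1).mpr h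
  refine h2.congr fun j => ?_
  push_cast
  ring

lemma summable_ss (a : ℝ) : Summable (ss a) := by
  set C : ℝ := |a^2-a|/2 + (2*|a| + 2*|a|^3) with hC
  have hC0 : 0 ≤ C := by positivity
  apply Summable.of_norm_bounded_eventually_nat 
    (summable_inv_sq.mul_left C)
  filter_upwards [eventually_ge_atTop (Nat.ceil (2*(|a|+1)))] with j hj
  have hj1 : 2*(|a|+1) ≤ (j:ℝ)+1 := by
    have := Nat.ceil_le.mp (le_refl (Nat.ceil (2*(|a|+1))))
    have hcj : (Nat.ceil (2*(|a|+1)) : ℝ) ≤ j := by exact_mod_cast hj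
    nlinarith [Nat.le_ceil (2*(|a|+1))]
  have hb := ss_bound a j hj1
  have hx1 : (1:ℝ) ≤ (j:ℝ)+1 := by have := Nat.cast_nonneg (α := ℝ) j; linarith
  have hq : |ss a j| ≤ |a^2-a|/(2*((j:ℝ)+1)^2) + (2*|a| + 2*|a|^3)/((j:ℝ)+1)^3 := by
    have := abs_sub_abs_le_abs_sub (ss a j) ((a^2-a)/(2*((j:ℝ)+1)^2))
    have h2 : |(a^2-a)/(2*((j:ℝ)+1)^2)| = |a^2-a|/(2*((j:ℝ)+1)^2) := by
      rw [abs_div]; congr 1; rw [abs_of_pos]; positivity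
    linarith [hb, abs_sub_abs_le_abs_sub (ss a j) ((a^2-a)/(2*((j:ℝ)+1)^2)), h2 ▸ this]
  have h3 : (2*|a| + 2*|a|^3)/((j:ℝ)+1)^3 ≤ (2*|a| + 2*|a|^3)/((j:ℝ)+1)^2 := by
    apply div_le_div_of_nonneg_left (by positivity) (by positivity)
    calc ((j:ℝ)+1)^2 = ((j:ℝ)+1)^2 * 1 := by ring
      _ ≤ ((j:ℝ)+1)^2 * ((j:ℝ)+1) := by nlinarith
      _ = ((j:ℝ)+1)^3 := by ring
  rw [Real.norm_eq_abs]
  calc |ss a j| ≤ |a^2-a|/(2*((j:ℝ)+1)^2) + (2*|a| + 2*|a|^3)/((j:ℝ)+1)^2 := by linarith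
    _ = C * (1/((j:ℝ)+1)^2) := by rw [hC]; field_simp

lemma log_Rr_eq_tsum {a : ℝ} (ha : 0 < a) (m : ℕ) :
    Real.log (Rr a m) = ∑' j, ss a (m+j) := by
  have hsum : Summable (fun j => ss a (m+j)) := by
    have := (summable_nat_add_iff m).mpr (summable_ss a)
    exact this.congr fun j => by rw [Nat.add_comm]
  have hpartial : ∀ N, ∑ j ∈ range N, ss a (m+j) =
      Real.log (Rr a m) - Real.log (Rr a (m+N)) := by
    intro N
    induction N with
    | zero => simp
    | succ n ih => rw [Finset.sum_range_succ, ih, ← log_Rr_sub ha (m+n)]; ring_nf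
  have h1 := hsum.hasSum.tendsto_sum_nat
  have h2 : Tendsto (fun N : ℕ => Real.log (Rr a m) - Real.log (Rr a (m+N))) atTop
      (𝓝 (Real.log (Rr a m) - 0)) := by
    apply Tendsto.const_sub
    have hcomp : Tendsto (fun N : ℕ => Rr a (m+N)) atTop (𝓝 1) := by
      have := (Rr_tendsto_one ha).comp (tendsto_add_atTop_nat m)
      exact this.congr fun N => by simp [Function.comp, Nat.add_comm]
    have := ((Real.continuousAt_log one_ne_zero).tendsto).comp hcomp
    simpa [Function.comp_def] using this
  have h3 : Tendsto (fun N : ℕ => ∑ j ∈ range N, ss a (m+j)) atTop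
      (𝓝 (Real.log (Rr a m) - 0)) := h2.congr fun N => (hpartial N).symm
  have := tendsto_nhds_unique h1 h3
  rw [this]; ring



noncomputable def Gg (q : ℝ) (j : ℕ) : ℝ := 3*ss (1-q) j + ss (2-q) j - ss (2-2*q) j

noncomputable def Kq (q : ℝ) : ℝ :=
  3*(2*|1-q| + 2*|1-q|^3) + (2*|2-q| + 2*|2-q|^3) + (2*|2-2*q| + 2*|2-2*q|^3)

noncomputable def Aq (q : ℝ) : ℝ := |1-q| + |2-q| + |2-2*q|

lemma Kq_nonneg (q : ℝ) : 0 ≤ Kq q := by unfold Kq; positivity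

lemma summable_shift_ss (a : ℝ) (m : ℕ) : Summable (fun j => ss a (m+j)) := by
  have := (summable_nat_add_iff m).mpr (summable_ss a)
  exact this.congr fun j => by rw [Nat.add_comm]

lemma summable_shift_Gg (q : ℝ) (m : ℕ) : Summable (fun j => Gg q (m+j)) := by
  unfold Gg
  exact (((summable_shift_ss (1-q) m).mul_left 3).add (summable_shift_ss (2-q) m)).sub
    (summable_shift_ss (2-2*q) m)

lemma Gg_bound (q : ℝ) (j : ℕ) (hj : 2*(Aq q + 1) ≤ (j:ℝ)+1) :
    |Gg q j| ≤ Kq q / ((j:ℝ)+1)^3 := by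
  have hx0 : (0:ℝ) < (j:ℝ)+1 := by positivity
  have hA1 := abs_nonneg (1-q); have hA2 := abs_nonneg (2-q); have hA3 := abs_nonneg (2-2*q)
  unfold Aq at hj
  have h1 := ss_bound (1-q) j (by linarith)
  have h2 := ss_bound (2-q) j (by linarith)
  have h3 := ss_bound (2-2*q) j (by linarith)
  have hzero : 3*(((1-q)^2-(1-q))/(2*((j:ℝ)+1)^2)) + ((2-q)^2-(2-q))/(2*((j:ℝ)+1)^2)
      - ((2-2*q)^2-(2-2*q))/(2*((j:ℝ)+1)^2) = 0 := by
    field_simp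
    ring
  have hrepr : Gg q j = 3*(ss (1-q) j - ((1-q)^2-(1-q))/(2*((j:ℝ)+1)^2))
      + (ss (2-q) j - ((2-q)^2-(2-q))/(2*((j:ℝ)+1)^2))
      - (ss (2-2*q) j - ((2-2*q)^2-(2-2*q))/(2*((j:ℝ)+1)^2)) := by
    unfold Gg; linarith [hzero]
  rw [hrepr]
  have tri : |3*(ss (1-q) j - ((1-q)^2-(1-q))/(2*((j:ℝ)+1)^2))
      + (ss (2-q) j - ((2-q)^2-(2-q))/(2*((j:ℝ)+1)^2))
      - (ss (2-2*q) j - ((2-2*q)^2-(2-2*q))/(2*((j:ℝ)+1)^2))|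
      ≤ 3*|ss (1-q) j - ((1-q)^2-(1-q))/(2*((j:ℝ)+1)^2)|
        + |ss (2-q) j - ((2-q)^2-(2-q))/(2*((j:ℝ)+1)^2)|
        + |ss (2-2*q) j - ((2-2*q)^2-(2-2*q))/(2*((j:ℝ)+1)^2)| := by
    calc _ ≤ |3*(ss (1-q) j - ((1-q)^2-(1-q))/(2*((j:ℝ)+1)^2))
        + (ss (2-q) j - ((2-q)^2-(2-q))/(2*((j:ℝ)+1)^2))|
        + |ss (2-2*q) j - ((2-2*q)^2-(2-2*q))/(2*((j:ℝ)+1)^2)| := abs_sub _ _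
      _ ≤ _ := by
          have h := abs_add_le (3*(ss (1-q) j - ((1-q)^2-(1-q))/(2*((j:ℝ)+1)^2)))
            ((ss (2-q) j - ((2-q)^2-(2-q))/(2*((j:ℝ)+1)^2)))
          have h3 : |(3:ℝ)| = 3 := by norm_num
          rw [abs_mul, h3] at h
          linarith
  have final : 3*((2*|1-q| + 2*|1-q|^3) / ((j:ℝ)+1)^3) + (2*|2-q| + 2*|2-q|^3) / ((j:ℝ)+1)^3
      + (2*|2-2*q| + 2*|2-2*q|^3) / ((j:ℝ)+1)^3 = Kq q / ((j:ℝ)+1)^3 := by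
    unfold Kq; field_simp
  linarith [tri, h1, h2, h3, final]

lemma pt_bound (m j : ℕ) (hm : 1 ≤ m) :
    1/(((m+j:ℕ):ℝ)+1)^3 ≤ (1/(m:ℝ)^((3:ℝ)/2)) * (1/(((j:ℝ)+1))^((3:ℝ)/2)) := by
  set X : ℝ := (m:ℝ) with hX
  set Y : ℝ := (j:ℝ)+1 with hY
  have hX0 : (0:ℝ) < X := by
    have : (1:ℝ) ≤ (m:ℝ) := by exact_mod_cast hm
    rw [hX]; linarith
  have hY0 : (0:ℝ) < Y := by positivity
  have hcast : ((m+j:ℕ):ℝ)+1 = X + Y := by push_cast; ring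
  rw [hcast]
  have h1 : X*Y ≤ (X+Y)^2 := by nlinarith
  have h2 : (X*Y)^((3:ℝ)/2) ≤ ((X+Y)^2)^((3:ℝ)/2) :=
    Real.rpow_le_rpow (by positivity) h1 (by norm_num)
  have h3 : ((X+Y)^2)^((3:ℝ)/2) = (X+Y)^(3:ℕ) := by
    rw [← Real.rpow_natCast (X+Y) 2, ← Real.rpow_mul (by positivity)]
    have he : ((2:ℕ):ℝ) * (3/2) = ((3:ℕ):ℝ) := by norm_num
    rw [he, Real.rpow_natCast]
  have h4 : (X*Y)^((3:ℝ)/2) = X^((3:ℝ)/2) * Y^((3:ℝ)/2) :=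
    Real.mul_rpow hX0.le hY0.le
  rw [one_div, one_div, one_div, ← mul_inv]
  apply inv_anti₀
  · rw [← h4]; positivity
  · rw [← h4]; rw [← h3] at *; linarith

lemma log_f_tsum {q : ℝ} (hq : q < 1) (m : ℕ) :
    Real.log (Rr (1-q) m^3 * Rr (2-q) m / Rr (2-2*q) m) = ∑' j, Gg q (m+j) := by
  have h1 : (0:ℝ) < 1 - q := by linarith
  have h2 : (0:ℝ) < 2 - q := by linarith
  have h3 : (0:ℝ) < 2 - 2*q := by linarith
  have R1 := Rr_pos h1 m
  have R2 := Rr_pos h2 m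
  have R3 := Rr_pos h3 m
  rw [Real.log_div (by positivity) R3.ne', Real.log_mul (by positivity) R2.ne',
    Real.log_pow, log_Rr_eq_tsum h1 m, log_Rr_eq_tsum h2 m, log_Rr_eq_tsum h3 m]
  have S1 := summable_shift_ss (1-q) m
  have S2 := summable_shift_ss (2-q) m
  have S3 := summable_shift_ss (2-2*q) m
  push_cast
  rw [← tsum_mul_left, ← Summable.tsum_add (S1.mul_left 3) S2, ← Summable.tsum_sub ((S1.mul_left 3).add S2) S3]
  simp [Gg]

noncomputable def Cp : ℝ := ∑' j : ℕ, 1/(((j:ℝ)+1))^((3:ℝ)/2)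

lemma Sp : Summable (fun j : ℕ => 1/(((j:ℝ)+1))^((3:ℝ)/2)) := by
  have h := Real.summable_one_div_nat_rpow.mpr (show (1:ℝ) < 3/2 by norm_num)
  have h2 := (summable_nat_add_iff 1).mpr h
  exact h2.congr fun j => by push_cast; ring_nf

lemma summable_log_f {q : ℝ} (hq : q < 1) :
    Summable (fun m => Real.log (Rr (1-q) m^3 * Rr (2-q) m / Rr (2-2*q) m)) := by
  have hSm : Summable (fun m : ℕ => (Kq q * Cp) * (1/(m:ℝ)^((3:ℝ)/2))) :=
    (Real.summable_one_div_nat_rpow.mpr (show (1:ℝ) < 3/2 by norm_num)).mul_left _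
  apply Summable.of_norm_bounded_eventually_nat hSm
  filter_upwards [eventually_ge_atTop (max 1 (Nat.ceil (2*(Aq q + 1))))] with m hm
  have hm1 : 1 ≤ m := le_trans (le_max_left _ _) hm
  have hmA : 2*(Aq q + 1) ≤ (m:ℝ) := by
    have h1 : Nat.ceil (2*(Aq q + 1)) ≤ m := le_trans (le_max_right _ _) hm
    have h2 : (Nat.ceil (2*(Aq q + 1)) : ℝ) ≤ (m:ℝ) := by exact_mod_cast h1
    linarith [Nat.le_ceil (2*(Aq q + 1))]
  set X : ℝ := (m:ℝ) with hX
  have hX1 : (1:ℝ) ≤ X := by rw [hX]; exact_mod_cast hm1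
  have hb : ∀ j : ℕ, |Gg q (m+j)| ≤ Kq q * (1/X^((3:ℝ)/2) * (1/(((j:ℝ)+1))^((3:ℝ)/2))) := by
    intro j
    have hcond : 2*(Aq q + 1) ≤ ((m+j:ℕ):ℝ)+1 := by
      push_cast
      have : (0:ℝ) ≤ (j:ℝ) := Nat.cast_nonneg j
      linarith
    have hgb := Gg_bound q (m+j) hcond
    have hpt := pt_bound m j hm1
    have hKnn := Kq_nonneg q
    calc |Gg q (m+j)| ≤ Kq q / (((m+j:ℕ):ℝ)+1)^3 := hgb
      _ = Kq q * (1/(((m+j:ℕ):ℝ)+1)^3) := by ring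
      _ ≤ Kq q * (1/X^((3:ℝ)/2) * (1/(((j:ℝ)+1))^((3:ℝ)/2))) := by
          apply mul_le_mul_of_nonneg_left _ hKnn
          exact hpt
  have Smaj : Summable (fun j : ℕ => Kq q * (1/X^((3:ℝ)/2) * (1/(((j:ℝ)+1))^((3:ℝ)/2)))) :=
    (Sp.mul_left _).mul_left _
  have SGabs : Summable (fun j => |Gg q (m+j)|) :=
    Summable.of_nonneg_of_le (fun j => abs_nonneg _) hb Smaj
  rw [Real.norm_eq_abs, log_f_tsum hq m]
  have step1 : |∑' j, Gg q (m+j)| ≤ ∑' j, |Gg q (m+j)| := by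
    have := norm_tsum_le_tsum_norm (f := fun j => Gg q (m+j)) (by simpa [Real.norm_eq_abs] using SGabs)
    simpa [Real.norm_eq_abs] using this
  have step2 : ∑' j, |Gg q (m+j)| ≤ ∑' j : ℕ, Kq q * (1/X^((3:ℝ)/2) * (1/(((j:ℝ)+1))^((3:ℝ)/2))) :=
    Summable.tsum_le_tsum hb SGabs Smaj
  have step3 : ∑' j : ℕ, Kq q * (1/X^((3:ℝ)/2) * (1/(((j:ℝ)+1))^((3:ℝ)/2)))
      = (Kq q * (1/X^((3:ℝ)/2))) * Cp := by
    rw [Cp, ← tsum_mul_left]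
    congr 1; funext j; ring
  calc |∑' j, Gg q (m+j)| ≤ ∑' j, |Gg q (m+j)| := step1
    _ ≤ ∑' j : ℕ, Kq q * (1/X^((3:ℝ)/2) * (1/(((j:ℝ)+1))^((3:ℝ)/2))) := step2
    _ = (Kq q * (1/X^((3:ℝ)/2))) * Cp := step3
    _ = (Kq q * Cp) * (1/X^((3:ℝ)/2)) := by ring

lemma multipliable_f {q : ℝ} (hq : q < 1) :
    Multipliable (fun m => Rr (1-q) m^3 * Rr (2-q) m / Rr (2-2*q) m) := by
  have h1 : (0:ℝ) < 1 - q := by linarith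
  have h2 : (0:ℝ) < 2 - q := by linarith
  have h3 : (0:ℝ) < 2 - 2*q := by linarith
  have hpos : ∀ m, 0 < Rr (1-q) m^3 * Rr (2-q) m / Rr (2-2*q) m := fun m => by
    have := Rr_pos h1 m; have := Rr_pos h2 m; have := Rr_pos h3 m
    positivity
  obtain ⟨S, hS⟩ := summable_log_f hq
  refine ⟨Real.exp S, ?_⟩
  have h4 : Tendsto (fun s : Finset ℕ =>
      Real.exp (∑ m ∈ s, Real.log (Rr (1-q) m^3 * Rr (2-q) m / Rr (2-2*q) m))) atTop
      (𝓝 (Real.exp S)) := (Real.continuous_exp.tendsto S).comp hS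
  have h5 : ∀ s : Finset ℕ,
      Real.exp (∑ m ∈ s, Real.log (Rr (1-q) m^3 * Rr (2-q) m / Rr (2-2*q) m))
      = ∏ m ∈ s, (Rr (1-q) m^3 * Rr (2-q) m / Rr (2-2*q) m) := by
    intro s
    rw [Real.exp_sum]
    exact Finset.prod_congr rfl fun m _ => Real.exp_log (hpos m)
  exact h4.congr fun s => h5 s



lemma f_eq {q : ℝ} (hq : q < 1) (m : ℕ) :
    (((m+1 : ℕ) : ℝ)) ^ (2 * q) *
      (Real.Gamma (1 - q + (m+1)) ^ 3 * Real.Gamma (2 - q + (m+1))) /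
      (Real.Gamma (1 + (m+1)) ^ 3 * Real.Gamma (2 - 2*q + (m+1))) =
    Rr (1-q) m ^ 3 * Rr (2-q) m / Rr (2-2*q) m := by
  have hx0 : (0:ℝ) < (m:ℝ) + 1 := by positivity
  set x : ℝ := (m:ℝ) + 1 with hxdef
  have hc : ((m+1:ℕ):ℝ) = x := by push_cast; rfl
  have hC : 0 < Real.Gamma x := Real.Gamma_pos_of_pos hx0
  have hA : 0 < Real.Gamma (x + (1-q)) := Real.Gamma_pos_of_pos (by linarith)
  have hB : 0 < Real.Gamma (x + (2-q)) := Real.Gamma_pos_of_pos (by linarith)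
  have hD : 0 < Real.Gamma (x + (2-2*q)) := Real.Gamma_pos_of_pos (by linarith)
  have e1 : 1 - q + x = x + (1-q) := by ring
  have e2 : 2 - q + x = x + (2-q) := by ring
  have e3 : 2 - 2*q + x = x + (2-2*q) := by ring
  have e4 : Real.Gamma (1 + x) = x * Real.Gamma x := by
    rw [add_comm, Real.Gamma_add_one hx0.ne']
  rw [hc, e1, e2, e3, e4, Rr, Rr, Rr, ← hxdef]
  have hpow : (x ^ ((1:ℝ)-q)) ^ (3:ℕ) = x ^ (3*(1-q)) := by
    rw [← Real.rpow_natCast (x ^ ((1:ℝ)-q)) 3, ← Real.rpow_mul hx0.le]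
    ring_nf
  have key : x ^ (2*q) * (x ^ (3*(1-q)) * x ^ (2-q)) = x ^ (3:ℕ) * x ^ (2-2*q) := by
    rw [← Real.rpow_natCast x 3, ← Real.rpow_add hx0, ← Real.rpow_add hx0, ← Real.rpow_add hx0]
    congr 1
    ring
  have keyfull : x^(2*q) * ((x^((1:ℝ)-q))^(3:ℕ) * x^((2:ℝ)-q)) = x^(3:ℕ) * x^(2-2*q) := by
    rw [hpow]; exact key
  have hp1 : (0:ℝ) < x ^ ((1:ℝ)-q) := Real.rpow_pos_of_pos hx0 _
  have hp2 : (0:ℝ) < x ^ ((2:ℝ)-q) := Real.rpow_pos_of_pos hx0 _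
  have hp3 : (0:ℝ) < x ^ (2-2*q) := Real.rpow_pos_of_pos hx0 _
  rw [div_pow, _root_.div_mul_div_comm, div_div_div_eq]
  rw [div_eq_div_iff (by positivity) (by positivity)]
  linear_combination (Real.Gamma (x+(1-q))^3 * Real.Gamma (x+(2-q)) * Real.Gamma x^4 *
    Real.Gamma (x+(2-2*q))) * keyfull



lemma fact_prod (n r : ℕ) : (n+r)! = n ! * ∏ k ∈ range r, (n+k+1) := by
  induction r with
  | zero => simp
  | succ r ih =>
      rw [prod_range_succ, ← mul_assoc, ← ih, show n+(r+1) = (n+r)+1 by ring, factorial_succ]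
      ring

noncomputable def tm (l : ℕ) (m : ℕ) : ℝ :=
  (∏ k ∈ range l, (((m:ℝ)+(k:ℝ)+2)/((m:ℝ)+1)))^3 *
    ∏ k ∈ range l, (((m:ℝ)+1)/((m:ℝ)+(k:ℝ)+(l:ℝ)+3))

lemma fm_eq (l m : ℕ) :
    (((m+1 : ℕ) : ℝ)) ^ (2 * (-(l:ℝ))) *
      (Real.Gamma (1 - (-(l:ℝ)) + (m+1)) ^ 3 * Real.Gamma (2 - (-(l:ℝ)) + (m+1))) /
      (Real.Gamma (1 + (m+1)) ^ 3 * Real.Gamma (2 - 2*(-(l:ℝ)) + (m+1))) = tm l m := by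
  have hG1 : Real.Gamma (1 - (-(l:ℝ)) + ((m:ℝ)+1)) = ((m+l+1)! : ℝ) := by
    rw [show (1 - (-(l:ℝ)) + ((m:ℝ)+1)) = ((m+l+1:ℕ):ℝ)+1 by push_cast; ring,
      Real.Gamma_nat_eq_factorial]
  have hG2 : Real.Gamma (2 - (-(l:ℝ)) + ((m:ℝ)+1)) = ((m+l+2)! : ℝ) := by
    rw [show (2 - (-(l:ℝ)) + ((m:ℝ)+1)) = ((m+l+2:ℕ):ℝ)+1 by push_cast; ring,
      Real.Gamma_nat_eq_factorial]
  have hG3 : Real.Gamma (1 + ((m:ℝ)+1)) = ((m+1)! : ℝ) := by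
    rw [show (1 + ((m:ℝ)+1)) = ((m+1:ℕ):ℝ)+1 by push_cast; ring,
      Real.Gamma_nat_eq_factorial]
  have hG4 : Real.Gamma (2 - 2*(-(l:ℝ)) + ((m:ℝ)+1)) = ((m+2*l+2)! : ℝ) := by
    rw [show (2 - 2*(-(l:ℝ)) + ((m:ℝ)+1)) = ((m+2*l+2:ℕ):ℝ)+1 by push_cast; ring,
      Real.Gamma_nat_eq_factorial]
  have hx0 : (0:ℝ) < (m:ℝ)+1 := by positivity
  have hpow : (((m+1 : ℕ) : ℝ)) ^ (2 * (-(l:ℝ))) = (((m:ℝ)+1)^(2*l : ℕ))⁻¹ := by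
    rw [show (2 * (-(l:ℝ))) = -((2*l:ℕ):ℝ) by push_cast; ring,
      Real.rpow_neg (by positivity), Real.rpow_natCast]
    push_cast
    rfl
  have P1 : ((m+l+1)! : ℝ) = ((m+1)! : ℝ) * ∏ k ∈ range l, ((m:ℝ)+(k:ℝ)+2) := by
    have := fact_prod (m+1) l
    rw [show m+l+1 = (m+1)+l by ring, this]
    push_cast
    congr 1
    exact Finset.prod_congr rfl fun k _ => by push_cast; ring
  have P2 : ((m+2*l+2)! : ℝ) = ((m+l+2)! : ℝ) * ∏ k ∈ range l, ((m:ℝ)+(k:ℝ)+(l:ℝ)+3) := by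
    have := fact_prod (m+l+2) l
    rw [show m+2*l+2 = (m+l+2)+l by ring, this]
    push_cast
    congr 1
    exact Finset.prod_congr rfl fun k _ => by push_cast; ring
  have hQ1 : ∏ k ∈ range l, (((m:ℝ)+(k:ℝ)+2)/((m:ℝ)+1)) =
      (∏ k ∈ range l, ((m:ℝ)+(k:ℝ)+2)) / ((m:ℝ)+1)^l := by
    rw [prod_div_distrib, prod_const, card_range]
  have hQ2 : ∏ k ∈ range l, (((m:ℝ)+1)/((m:ℝ)+(k:ℝ)+(l:ℝ)+3)) =
      ((m:ℝ)+1)^l / ∏ k ∈ range l, ((m:ℝ)+(k:ℝ)+(l:ℝ)+3) := by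
    rw [prod_div_distrib, prod_const, card_range]
  have hQ2pos : (0:ℝ) < ∏ k ∈ range l, ((m:ℝ)+(k:ℝ)+(l:ℝ)+3) :=
    prod_pos fun k _ => by positivity
  have hC : (0:ℝ) < ((m+1)! : ℝ) := by exact_mod_cast (m+1).factorial_pos
  have hB : (0:ℝ) < ((m+l+2)! : ℝ) := by exact_mod_cast (m+l+2).factorial_pos
  rw [tm, hQ1, hQ2]
  rw [hG1, hG2, hG3, hG4, hpow, P1, P2]
  have h2l : ((m:ℝ)+1)^(2*l) * ((m:ℝ)+1)^l = ((m:ℝ)+1)^(3*l) := by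
    rw [← pow_add]; congr 1; ring
  field_simp
  ring

noncomputable def cc (N k : ℕ) : ℝ := ∏ i ∈ range k, (((N:ℝ)+(i:ℝ)+1)/((i:ℝ)+1))

lemma cc_pos (N k : ℕ) : 0 < cc N k := prod_pos fun i _ => by positivity

lemma cc_zero (k : ℕ) : cc 0 k = 1 := by
  unfold cc
  apply Finset.prod_eq_one
  intro i _
  rw [Nat.cast_zero, zero_add, div_self]
  positivity

lemma cc_step (N k : ℕ) : cc N (k+1) = cc N k * (((N:ℝ)+(k:ℝ)+1)/((k:ℝ)+1)) := by
  simp only [cc, prod_range_succ]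

lemma cc_succ (N k : ℕ) : cc (N+1) k * ((N:ℝ)+1) = cc N k * ((N:ℝ)+1+(k:ℝ)) := by
  induction k with
  | zero => simp [cc]
  | succ k ih =>
      rw [cc_step, cc_step]
      have hk : ((k:ℝ)+1) ≠ 0 := by positivity
      push_cast
      field_simp
      linear_combination ((N:ℝ)+(k:ℝ)+2) * ih

noncomputable def Qq (l N : ℕ) : ℝ :=
  (∏ k ∈ range l, cc N (k+1))^3 / ∏ k ∈ range l, cc N (k+l+2)

lemma prod_tm_eq (l N : ℕ) : ∏ m ∈ range N, tm l m = Qq l N := by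
  induction N with
  | zero => simp [Qq, cc_zero]
  | succ N ih =>
      rw [prod_range_succ, ih, Qq, Qq, tm]
      have hN : (0:ℝ) < (N:ℝ)+1 := by positivity
      have hr1 : ∀ k, cc (N+1) (k+1) = cc N (k+1) * (((N:ℝ)+(k:ℝ)+2)/((N:ℝ)+1)) := by
        intro k
        have := cc_succ N (k+1)
        have h2 : cc (N+1) (k+1) = cc N (k+1) * ((N:ℝ)+1+((k+1:ℕ):ℝ)) / ((N:ℝ)+1) := by
          rw [eq_div_iff hN.ne']
          linear_combination this
        rw [h2]
        push_cast
        ring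
      have hr2 : ∀ k, cc (N+1) (k+l+2) = cc N (k+l+2) * (((N:ℝ)+(k:ℝ)+(l:ℝ)+3)/((N:ℝ)+1)) := by
        intro k
        have := cc_succ N (k+l+2)
        have h2 : cc (N+1) (k+l+2) = cc N (k+l+2) * ((N:ℝ)+1+((k+l+2:ℕ):ℝ)) / ((N:ℝ)+1) := by
          rw [eq_div_iff hN.ne']
          linear_combination this
        rw [h2]
        push_cast
        ring
      rw [Finset.prod_congr rfl (fun k _ => hr1 k), Finset.prod_congr rfl (fun k _ => hr2 k)]
      rw [prod_mul_distrib, prod_mul_distrib]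
      have hP2 : (0:ℝ) < ∏ k ∈ range l, cc N (k+l+2) := prod_pos fun k _ => cc_pos _ _
      have hP2' : (0:ℝ) < ∏ k ∈ range l, (((N:ℝ)+(k:ℝ)+(l:ℝ)+3)/((N:ℝ)+1)) :=
        prod_pos fun k _ => by positivity
      have hbody : ∀ k, (((N:ℝ)+1)/((N:ℝ)+(k:ℝ)+(l:ℝ)+3)) =
          (((N:ℝ)+(k:ℝ)+(l:ℝ)+3)/((N:ℝ)+1))⁻¹ := fun k => by
        rw [inv_div]
      rw [mul_pow]
      rw [show ∏ k ∈ range l, (((N:ℝ)+1)/((N:ℝ)+(k:ℝ)+(l:ℝ)+3)) =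
        (∏ k ∈ range l, (((N:ℝ)+(k:ℝ)+(l:ℝ)+3)/((N:ℝ)+1)))⁻¹ by
          rw [← prod_inv_distrib]; exact Finset.prod_congr rfl fun k _ => hbody k]
      field_simp



noncomputable def dd (N k : ℕ) : ℝ := ∏ i ∈ range k, (1/((i:ℝ)+1) + 1/(N:ℝ))

noncomputable def Pinf (l : ℕ) : ℝ :=
  (∏ k ∈ range l, (1/(((k+1)! : ℕ):ℝ)))^3 / ∏ k ∈ range l, (1/(((k+l+2)! : ℕ):ℝ))

lemma dd_pos (N k : ℕ) : 0 < dd N k := by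
  apply prod_pos; intro i _
  have h1 : (0:ℝ) < 1/((i:ℝ)+1) := by positivity
  have h2 : (0:ℝ) ≤ 1/((N:ℝ)) := by positivity
  linarith

lemma cc_eq_dd (N k : ℕ) (hN : 1 ≤ N) : cc N k = dd N k * (N:ℝ)^k := by
  have hN0 : (0:ℝ) < (N:ℝ) := by exact_mod_cast hN
  unfold cc dd
  have hrw : (∏ i ∈ range k, (1/((i:ℝ)+1) + 1/(N:ℝ))) * (N:ℝ)^k
      = ∏ i ∈ range k, ((1/((i:ℝ)+1) + 1/(N:ℝ)) * (N:ℝ)) := by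
    rw [prod_mul_distrib, prod_const, card_range]
  rw [hrw]
  apply Finset.prod_congr rfl
  intro i _
  field_simp
  ring

lemma dd_tendsto (k : ℕ) : Tendsto (fun N : ℕ => dd N k) atTop (𝓝 (1/((k ! : ℕ):ℝ))) := by
  have hlim : (1/((k ! : ℕ):ℝ)) = ∏ i ∈ range k, (1/((i:ℝ)+1) + 0) := by
    simp only [add_zero, one_div]
    rw [prod_inv_distrib]
    congr 1
    rw [show (∏ i ∈ range k, ((i:ℝ)+1)) = ((∏ i ∈ range k, (i+1) : ℕ):ℝ) by push_cast; rfl,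
      prod_range_add_one_eq_factorial]
  rw [hlim]
  unfold dd
  apply tendsto_finset_prod
  intro i _
  exact tendsto_const_nhds.add tendsto_one_div_atTop_nhds_zero_nat

lemma sum_eq (l : ℕ) : 3 * (∑ k ∈ range l, (k+1)) = ∑ k ∈ range l, (k+l+2) := by
  have h2 := Finset.sum_range_id_mul_two l
  have e1 : ∑ k ∈ range l, (k+1) = (∑ k ∈ range l, k) + l := by
    rw [Finset.sum_add_distrib, sum_const, card_range, smul_eq_mul, mul_one]
  have e2 : ∑ k ∈ range l, (k+l+2) = (∑ k ∈ range l, k) + l*(l+2) := by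
    rw [Finset.sum_congr rfl (fun k _ => (by omega : k+l+2 = k + (l+2))),
      Finset.sum_add_distrib, sum_const, card_range, smul_eq_mul]
  rw [e1, e2]
  cases l with
  | zero => simp
  | succ n =>
      simp only [Nat.succ_sub_one] at h2
      nlinarith [h2]

lemma Qq_eq_dd (l N : ℕ) (hN : 1 ≤ N) :
    Qq l N = (∏ k ∈ range l, dd N (k+1))^3 / ∏ k ∈ range l, dd N (k+l+2) := by
  have hN0 : (0:ℝ) < (N:ℝ) := by exact_mod_cast hN
  unfold Qq
  rw [Finset.prod_congr rfl (fun k _ => cc_eq_dd N (k+1) hN),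
    Finset.prod_congr rfl (fun k _ => cc_eq_dd N (k+l+2) hN),
    prod_mul_distrib, prod_mul_distrib, prod_pow_eq_pow_sum, prod_pow_eq_pow_sum]
  rw [mul_pow, ← pow_mul]
  rw [show (∑ k ∈ range l, (k+1)) * 3 = ∑ k ∈ range l, (k+l+2) by
    rw [← sum_eq l]; ring]
  have hpow : (0:ℝ) < (N:ℝ)^(∑ k ∈ range l, (k+l+2)) := by positivity
  have hdd2 : (0:ℝ) < ∏ k ∈ range l, dd N (k+l+2) := prod_pos fun k _ => dd_pos _ _
  field_simp

lemma Qq_tendsto (l : ℕ) : Tendsto (fun N => Qq l N) atTop (𝓝 (Pinf l)) := by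
  have h1 : ∀ N, 1 ≤ N → Qq l N =
      (∏ k ∈ range l, dd N (k+1))^3 / ∏ k ∈ range l, dd N (k+l+2) := fun N hN => Qq_eq_dd l N hN
  have hnum : Tendsto (fun N => (∏ k ∈ range l, dd N (k+1))^3) atTop
      (𝓝 ((∏ k ∈ range l, (1/((((k+1)!) : ℕ):ℝ)))^3)) := by
    apply Tendsto.pow
    exact tendsto_finset_prod _ fun k _ => dd_tendsto (k+1)
  have hden : Tendsto (fun N => ∏ k ∈ range l, dd N (k+l+2)) atTop
      (𝓝 (∏ k ∈ range l, (1/((((k+l+2)!) : ℕ):ℝ)))) :=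
    tendsto_finset_prod _ fun k _ => dd_tendsto (k+l+2)
  have hne : (∏ k ∈ range l, (1/((((k+l+2)!) : ℕ):ℝ))) ≠ 0 := by
    refine (prod_pos fun k _ => ?_).ne'
    have := (k+l+2).factorial_pos
    positivity
  have := hnum.div hden hne
  rw [Pinf]
  exact this.congr' (by filter_upwards [eventually_ge_atTop 1] with N hN; exact (h1 N hN).symm)



noncomputable def Hh (l : ℕ) : ℝ := ∏ k ∈ range l, (((k+l+2)! : ℕ):ℝ)

noncomputable def Kk (l : ℕ) : ℝ := ∏ k ∈ range l, (((k+1)! : ℕ):ℝ)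

noncomputable def Tt (l : ℕ) : ℝ :=
  ∏ k ∈ range l, (((3+l+k)! : ℕ):ℝ)/((((k+1)! : ℕ):ℝ)^2 * (((k)! : ℕ):ℝ))

lemma fact_ne (n : ℕ) : ((n ! : ℕ):ℝ) ≠ 0 := Nat.cast_ne_zero.mpr n.factorial_ne_zero

lemma Hh_ne (l : ℕ) : Hh l ≠ 0 := prod_ne_zero_iff.mpr fun k _ => fact_ne _

lemma Kk_ne (l : ℕ) : Kk l ≠ 0 := prod_ne_zero_iff.mpr fun k _ => fact_ne _

lemma Hstep (l : ℕ) : Hh (l+1) * (((l+2)! : ℕ):ℝ) =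
    Hh l * (((2*l+2)! : ℕ):ℝ) * (((2*l+3)! : ℕ):ℝ) := by
  have h1 : Hh (l+1) = ∏ k ∈ range (l+1), (((k+l+3)! : ℕ):ℝ) := by
    unfold Hh
    exact Finset.prod_congr rfl fun k _ => by rw [show k+(l+1)+2 = k+l+3 from by omega]
  have h2 : ∏ k ∈ range (l+2), (((k+l+2)! : ℕ):ℝ) =
      (∏ k ∈ range (l+1), (((k+l+3)! : ℕ):ℝ)) * (((l+2)! : ℕ):ℝ) := by
    rw [prod_range_succ' (fun k => (((k+l+2)! : ℕ):ℝ)) (l+1)]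
    congr 1
    · exact Finset.prod_congr rfl fun k _ => by rw [show k+1+l+2 = k+l+3 from by omega]
    · rw [show 0+l+2 = l+2 from by omega]
  have h3 : ∏ k ∈ range (l+2), (((k+l+2)! : ℕ):ℝ) =
      Hh l * (((2*l+2)! : ℕ):ℝ) * (((2*l+3)! : ℕ):ℝ) := by
    rw [prod_range_succ, prod_range_succ, ← Hh]
    rw [show l+l+2 = 2*l+2 from by omega, show l+1+l+2 = 2*l+3 from by omega]
  rw [h1, ← h2, h3]

lemma Kstep (l : ℕ) : Kk (l+1) = Kk l * (((l+1)! : ℕ):ℝ) := by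
  unfold Kk
  rw [prod_range_succ]

lemma Tstep (l : ℕ) : Tt (l+1) * ((((l+3)! : ℕ):ℝ) * (((l+1)! : ℕ):ℝ)^2 * ((l ! : ℕ):ℝ)) =
    Tt l * (((2*l+3)! : ℕ):ℝ) * (((2*l+4)! : ℕ):ℝ) := by
  have hA : Tt (l+1) = (∏ k ∈ range (l+1), (((k+l+4)! : ℕ):ℝ)) /
      (∏ k ∈ range (l+1), ((((k+1)! : ℕ):ℝ)^2 * (((k)! : ℕ):ℝ))) := by
    unfold Tt
    rw [prod_div_distrib]
    congr 1
    exact Finset.prod_congr rfl fun k _ => by rw [show 3+(l+1)+k = k+l+4 from by omega]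
  have hT : Tt l = (∏ k ∈ range l, (((3+l+k)! : ℕ):ℝ)) /
      (∏ k ∈ range l, ((((k+1)! : ℕ):ℝ)^2 * (((k)! : ℕ):ℝ))) := by
    unfold Tt
    rw [prod_div_distrib]
  have h2 : ∏ k ∈ range (l+2), (((k+l+3)! : ℕ):ℝ) =
      (∏ k ∈ range (l+1), (((k+l+4)! : ℕ):ℝ)) * (((l+3)! : ℕ):ℝ) := by
    rw [prod_range_succ' (fun k => (((k+l+3)! : ℕ):ℝ)) (l+1)]
    congr 1
    · exact Finset.prod_congr rfl fun k _ => by rw [show k+1+l+3 = k+l+4 from by omega]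
    · rw [show 0+l+3 = l+3 from by omega]
  have h3 : ∏ k ∈ range (l+2), (((k+l+3)! : ℕ):ℝ) =
      (∏ k ∈ range l, (((3+l+k)! : ℕ):ℝ)) * (((2*l+3)! : ℕ):ℝ) * (((2*l+4)! : ℕ):ℝ) := by
    rw [prod_range_succ, prod_range_succ]
    rw [show l+l+3 = 2*l+3 from by omega, show l+1+l+3 = 2*l+4 from by omega]
    congr 2
    exact Finset.prod_congr rfl fun k _ => by rw [show k+l+3 = 3+l+k from by omega]
  have hB : ∏ k ∈ range (l+1), ((((k+1)! : ℕ):ℝ)^2 * (((k)! : ℕ):ℝ)) =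
      (∏ k ∈ range l, ((((k+1)! : ℕ):ℝ)^2 * (((k)! : ℕ):ℝ))) *
        ((((l+1)! : ℕ):ℝ)^2 * ((l ! : ℕ):ℝ)) := prod_range_succ _ _
  have hDne : (∏ k ∈ range l, ((((k+1)! : ℕ):ℝ)^2 * (((k)! : ℕ):ℝ))) ≠ 0 :=
    prod_ne_zero_iff.mpr fun k _ => mul_ne_zero (pow_ne_zero _ (fact_ne _)) (fact_ne _)
  have gen : ∀ (a d e c : ℝ), d ≠ 0 → e ≠ 0 → a/(d*e)*(c*e) = a*c/d := by
    intros a d e c hd he; field_simp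
  rw [hA, hT, hB]
  have key : (∏ k ∈ range (l+1), (((k+l+4)! : ℕ):ℝ)) * (((l+3)! : ℕ):ℝ) =
      (∏ k ∈ range l, (((3+l+k)! : ℕ):ℝ)) * (((2*l+3)! : ℕ):ℝ) * (((2*l+4)! : ℕ):ℝ) := by
    rw [← h2, h3]
  have hE : ((((l+1)! : ℕ):ℝ)^2 * ((l ! : ℕ):ℝ)) ≠ 0 :=
    mul_ne_zero (pow_ne_zero _ (fact_ne _)) (fact_ne _)
  rw [show (((l+3)! : ℕ):ℝ) * (((l+1)! : ℕ):ℝ)^2 * ((l ! : ℕ):ℝ) =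
    (((l+3)! : ℕ):ℝ) * ((((l+1)! : ℕ):ℝ)^2 * ((l ! : ℕ):ℝ)) from by ring]
  rw [gen _ _ _ _ hDne hE]
  rw [div_mul_eq_mul_div, div_mul_eq_mul_div]
  congr 1

lemma main_id (l : ℕ) :
    ((l ! : ℕ):ℝ) * (((2*l+2)! : ℕ):ℝ) / (((l+2)! : ℕ):ℝ) * (Hh l / (Kk l)^3) = Tt l := by
  induction l with
  | zero =>
      unfold Hh Kk Tt
      norm_num [Nat.factorial]
  | succ l ih =>
      have e1 : 2*(l+1)+2 = 2*l+4 := by omega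
      have e2 : (l+1)+2 = l+3 := by omega
      rw [e1, e2, Kstep]
      have hH : Hh (l+1) = Hh l * (((2*l+2)! : ℕ):ℝ) * (((2*l+3)! : ℕ):ℝ) / (((l+2)! : ℕ):ℝ) := by
        rw [eq_div_iff (fact_ne _)]
        exact Hstep l
      have hT : Tt (l+1) = Tt l * (((2*l+3)! : ℕ):ℝ) * (((2*l+4)! : ℕ):ℝ) /
          ((((l+3)! : ℕ):ℝ) * (((l+1)! : ℕ):ℝ)^2 * ((l ! : ℕ):ℝ)) := by
        rw [eq_div_iff (by
          exact mul_ne_zero (mul_ne_zero (fact_ne _) (pow_ne_zero _ (fact_ne _))) (fact_ne _))]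
        exact Tstep l
      rw [hH, hT, ← ih]
      have f24 : (((2*l+4)! : ℕ):ℝ) = ((2*l+4:ℕ):ℝ) * (((2*l+3)! : ℕ):ℝ) := by
        rw [show 2*l+4 = (2*l+3)+1 from by omega, Nat.factorial_succ]
        push_cast; ring
      have hKne := Kk_ne l
      have hHne := Hh_ne l
      field_simp


lemma Pinf_eq (l : ℕ) : Pinf l = Hh l / (Kk l)^3 := by
  unfold Pinf Hh Kk
  simp only [one_div]
  rw [prod_inv_distrib, prod_inv_distrib]
  have h1 := Hh_ne l
  have h2 := Kk_ne l
  unfold Hh at h1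
  unfold Kk at h2
  field_simp

end Stmt17Aux

/-- the Mellin transform of the critical (`τ = 1`, `λ₁ = λ₂ = 0`)
Selberg integral distribution
`F(q) = Γ(1−q)Γ(3−2q)/Γ(3−q) · ∏_{m≥1} m^{2q} Γ(1−q+m)³Γ(2−q+m)/(Γ(1+m)³Γ(2−2q+m))`:
the product converges for `q < 1` and the negative integer moments are
`F(−l) = ∏_{k=0}^{l−1} (3+l+k)!/((k+1)!² k!)`. -/
theorem stmt17
    (f : ℝ → ℕ → ℝ)
    (hf : ∀ (q : ℝ) (m : ℕ), f q m =
      (((m+1 : ℕ) : ℝ)) ^ (2 * q) *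
      (Real.Gamma (1 - q + (m+1)) ^ 3 * Real.Gamma (2 - q + (m+1))) /
      (Real.Gamma (1 + (m+1)) ^ 3 * Real.Gamma (2 - 2*q + (m+1))))
    (F : ℝ → ℝ)
    (hF : ∀ q : ℝ, F q =
      Real.Gamma (1 - q) * Real.Gamma (3 - 2*q) / Real.Gamma (3 - q) *
        ∏' m : ℕ, f q m) :
    (∀ q : ℝ, q < 1 → Multipliable (f q)) ∧
    (∀ l : ℕ, 0 < l →
      F (-(l : ℝ)) = ∏ k ∈ Finset.range l,
        ((Nat.factorial (3 + l + k) : ℝ) /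
          ((Nat.factorial (k + 1) : ℝ) ^ 2 * (Nat.factorial k : ℝ)))) := by
  constructor
  · intro q hq
    exact (multipliable_f hq).congr fun m => ((hf q m).trans (f_eq hq m)).symm
  · intro l _
    rw [hF]
    have hql : -(l:ℝ) < 1 := by
      have : (0:ℝ) ≤ (l:ℝ) := Nat.cast_nonneg l
      linarith
    have hm : Multipliable (f (-(l:ℝ))) :=
      (multipliable_f hql).congr fun m => ((hf _ m).trans (f_eq hql m)).symm
    have hfm : ∀ m, f (-(l:ℝ)) m = tm l m := fun m => (hf _ m).trans (fm_eq l m)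
    have hprod : Filter.Tendsto (fun N => ∏ m ∈ Finset.range N, f (-(l:ℝ)) m)
        Filter.atTop (nhds (∏' m, f (-(l:ℝ)) m)) := hm.hasProd.tendsto_prod_nat
    have heq : (fun N => ∏ m ∈ Finset.range N, f (-(l:ℝ)) m) = fun N => Qq l N :=
      funext fun N => by
        rw [Finset.prod_congr rfl fun m _ => hfm m, prod_tm_eq]
    rw [heq] at hprod
    have htp : ∏' m, f (-(l:ℝ)) m = Pinf l := tendsto_nhds_unique hprod (Qq_tendsto l)
    rw [htp, Pinf_eq]
    have hG1 : Real.Gamma (1 - -(l:ℝ)) = ((l.factorial : ℕ):ℝ) := by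
      rw [show (1 - -(l:ℝ)) = ((l:ℕ):ℝ)+1 by push_cast; ring, Real.Gamma_nat_eq_factorial]
    have hG2 : Real.Gamma (3 - 2*(-(l:ℝ))) = (((2*l+2).factorial : ℕ):ℝ) := by
      rw [show (3 - 2*(-(l:ℝ))) = ((2*l+2:ℕ):ℝ)+1 by push_cast; ring,
        Real.Gamma_nat_eq_factorial]
    have hG3 : Real.Gamma (3 - -(l:ℝ)) = (((l+2).factorial : ℕ):ℝ) := by
      rw [show (3 - -(l:ℝ)) = ((l+2:ℕ):ℝ)+1 by push_cast; ring, Real.Gamma_nat_eq_factorial]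
    rw [hG1, hG2, hG3]
    exact main_id l
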